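/- Two-sided bound consistency: for the weak solution u of -Δu = f and any v, w ∈ H¹₀(Ω), y ∈ H(Ω,div), the minorant never exceeds the majorant: 2(J(w) - J(v)) ≤ (‖y - ∇v‖_Ω + C_F ‖f + div y‖_Ω)², and the true error ‖∇(u-v)‖²_Ω lies in the interval [2(J(w) - J(v)), (‖y - ∇v‖_Ω + C_F‖f + div y‖_Ω)²]. -/

import Mathlib

open RealInnerProductSpace

/-- Two-sided bound consistency for the Poisson problem `-Δu = f`: for any
`v, w ∈ H¹₀(Ω)` and `y ∈ H(Ω,div)`, the minorant `2(J(w) - J(v))` never exceeds the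
majorant `(‖y - ∇v‖_Ω + C_F‖f + div y‖_Ω)²`, and the true error `‖∇(u-v)‖²_Ω` lies
in the interval `[2(J(w) - J(v)), (‖y - ∇v‖_Ω + C_F‖f + div y‖_Ω)²]`. -/
theorem two_sided_bound_consistency
    {V L Ld : Type*}
    [NormedAddCommGroup L] [InnerProductSpace ℝ L]
    [NormedAddCommGroup Ld] [InnerProductSpace ℝ Ld]
    [AddCommGroup V] [Module ℝ V]
    (ι : V →ₗ[ℝ] L) (grad : V →ₗ[ℝ] Ld)
    (f : L) (u v w : V) (y : Ld) (divy : L) (CF : ℝ) (hCF : 0 < CF)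
    (hFried : ∀ z : V, ‖ι z‖ ≤ CF * ‖grad z‖)
    (hweak : ∀ η : V, ⟪grad u, grad η⟫ = ⟪f, ι η⟫)
    (hIBP : ∀ z : V, ⟪divy, ι z⟫ + ⟪y, grad z⟫ = 0) :
    2 * ((⟪f, ι w⟫ - (1 / 2) * ‖grad w‖ ^ 2)
        - (⟪f, ι v⟫ - (1 / 2) * ‖grad v‖ ^ 2))
      ≤ (‖y - grad v‖ + CF * ‖f + divy‖) ^ 2 ∧
    2 * ((⟪f, ι w⟫ - (1 / 2) * ‖grad w‖ ^ 2)
        - (⟪f, ι v⟫ - (1 / 2) * ‖grad v‖ ^ 2))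
      ≤ ‖grad (u - v)‖ ^ 2 ∧
    ‖grad (u - v)‖ ^ 2 ≤ (‖y - grad v‖ + CF * ‖f + divy‖) ^ 2 := by
  have hkey : ∀ z : V, 2 * ((⟪f, ι u⟫ - (1 / 2) * ‖grad u‖ ^ 2)
      - (⟪f, ι z⟫ - (1 / 2) * ‖grad z‖ ^ 2)) = ‖grad (u - z)‖ ^ 2 := by
    intro z
    have h1 := hweak (u - z)
    simp only [map_sub, inner_sub_right] at h1
    have h2 : ‖grad (u - z)‖ ^ 2
        = ‖grad u‖ ^ 2 - 2 * ⟪grad u, grad z⟫ + ‖grad z‖ ^ 2 := by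
      rw [map_sub]; exact norm_sub_sq_real _ _
    have h3 : (⟪grad u, grad u⟫ : ℝ) = ‖grad u‖ ^ 2 :=
      real_inner_self_eq_norm_sq _
    nlinarith [h1, h2, h3]
  have herr : 2 * ((⟪f, ι w⟫ - (1 / 2) * ‖grad w‖ ^ 2)
      - (⟪f, ι v⟫ - (1 / 2) * ‖grad v‖ ^ 2)) ≤ ‖grad (u - v)‖ ^ 2 := by
    have h1 := hkey v
    have h2 := hkey w
    nlinarith [sq_nonneg ‖grad (u - w)‖]
  set M : ℝ := ‖y - grad v‖ + CF * ‖f + divy‖ with hM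
  have hMnn : 0 ≤ M := by rw [hM]; positivity
  have hmaj : ‖grad (u - v)‖ ^ 2 ≤ M ^ 2 := by
    set e : V := u - v with he
    have h1 : ‖grad e‖ ^ 2 = ⟪f + divy, ι e⟫ + ⟪y - grad v, grad e⟫ := by
      have hw := hweak e
      have hi := hIBP e
      have hge : grad e = grad u - grad v := by rw [he, map_sub]
      have hn : (⟪grad e, grad e⟫ : ℝ) = ‖grad e‖ ^ 2 :=
        real_inner_self_eq_norm_sq _
      simp only [hge, inner_add_left, inner_sub_left, inner_sub_right] at *
      linarith
    have h2 : ‖grad e‖ ^ 2 ≤ M * ‖grad e‖ := by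
      rw [h1, hM]
      have b1 : ⟪f + divy, ι e⟫ ≤ ‖f + divy‖ * ‖ι e‖ := real_inner_le_norm _ _
      have b2 : ⟪y - grad v, grad e⟫ ≤ ‖y - grad v‖ * ‖grad e‖ := real_inner_le_norm _ _
      have b3 : ‖ι e‖ ≤ CF * ‖grad e‖ := hFried e
      have b4 : 0 ≤ ‖f + divy‖ := norm_nonneg _
      nlinarith
    rcases eq_or_lt_of_le (norm_nonneg (grad e)) with h0 | h0
    · rw [← h0]; simpa using sq_nonneg M
    · have hle : ‖grad e‖ ≤ M :=
        (mul_le_mul_iff_of_pos_right h0).mp (by nlinarith : ‖grad e‖ * ‖grad e‖ ≤ M * ‖grad e‖)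
      nlinarith
  exact ⟨le_trans herr hmaj, herr, hmaj⟩
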